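/- Let M > 0 be a real random variable on a probability space and let α ∈ (0,1). Then E[Φ(log(1/α)/M + M/2)] ≥ Φ(√(2·log(1/α))) > 1 − α. -/

import Mathlib

open MeasureTheory Real

/-- The standard normal cumulative distribution function. -/
noncomputable def Phi (t : ℝ) : ℝ :=
  (Real.sqrt (2 * Real.pi))⁻¹ * ∫ x in Set.Iic t, Real.exp (-x ^ 2 / 2)

open Set
lemma gauss_rw : (fun x : ℝ => Real.exp (-x ^ 2 / 2)) = fun x => Real.exp (-(1/2 : ℝ) * x ^ 2) := by
  funext x; congr 1; ring

lemma gauss_integrable : Integrable (fun x : ℝ => Real.exp (-x ^ 2 / 2)) := by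
  rw [gauss_rw]
  exact integrable_exp_neg_mul_sq (by norm_num : (0:ℝ) < 1/2)

lemma gauss_total : ∫ x : ℝ, Real.exp (-x ^ 2 / 2) = Real.sqrt (2 * Real.pi) := by
  rw [gauss_rw, integral_gaussian]
  congr 1; ring

lemma gauss_half : ∫ x in Ioi (0:ℝ), Real.exp (-x ^ 2 / 2) = Real.sqrt (2 * Real.pi) / 2 := by
  rw [gauss_rw, integral_gaussian_Ioi]
  congr 2; ring

lemma sqrt2pi_pos : 0 < Real.sqrt (2 * Real.pi) :=
  Real.sqrt_pos.2 (by positivity)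

lemma Phi_mono : Monotone Phi := by
  intro a b hab
  unfold Phi
  apply mul_le_mul_of_nonneg_left _ (by positivity)
  apply setIntegral_mono_set gauss_integrable.integrableOn
  · filter_upwards with x using Real.exp_nonneg _
  · exact Filter.Eventually.of_forall fun x hx => le_trans hx hab

lemma Phi_le_one (t : ℝ) : Phi t ≤ 1 := by
  unfold Phi
  rw [← inv_mul_cancel₀ (ne_of_gt sqrt2pi_pos)]
  apply mul_le_mul_of_nonneg_left _ (by positivity)
  rw [← gauss_total]
  exact setIntegral_le_integral gauss_integrable
    (Filter.Eventually.of_forall fun x => Real.exp_nonneg _)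

lemma Phi_nonneg (t : ℝ) : 0 ≤ Phi t := by
  unfold Phi
  apply mul_nonneg (by positivity)
  exact setIntegral_nonneg measurableSet_Iic fun x _ => Real.exp_nonneg _

lemma shift_integral (s : ℝ) :
    ∫ x in Ioi s, Real.exp (-x ^ 2 / 2) = ∫ u in Ioi (0:ℝ), Real.exp (-(u + s) ^ 2 / 2) := by
  have hmp : MeasurePreserving (fun x : ℝ => x + s) volume volume :=
    measurePreserving_add_right volume s
  have hme : MeasurableEmbedding (fun x : ℝ => x + s) :=
    (MeasurableEquiv.addRight s).measurableEmbedding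
  have h := hmp.setIntegral_preimage_emb hme (fun x => Real.exp (-x ^ 2 / 2)) (Ioi s)
  rw [← h]
  congr 1
  ext x; simp

lemma tail_bound {s : ℝ} (hs : 0 ≤ s) :
    ∫ x in Ioi s, Real.exp (-x ^ 2 / 2) ≤ Real.exp (-s ^ 2 / 2) * (Real.sqrt (2 * Real.pi) / 2) := by
  rw [shift_integral s]
  have h1 : ∫ u in Ioi (0:ℝ), Real.exp (-(u + s) ^ 2 / 2)
      ≤ ∫ u in Ioi (0:ℝ), Real.exp (-s ^ 2 / 2) * Real.exp (-u ^ 2 / 2) := by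
    apply setIntegral_mono_on
    · exact (gauss_integrable.comp_add_right s).integrableOn
    · exact (gauss_integrable.const_mul _).integrableOn
    · exact measurableSet_Ioi
    · intro u hu
      rw [← Real.exp_add, Real.exp_le_exp]
      have : (0:ℝ) < u := hu
      nlinarith
  calc _ ≤ _ := h1
    _ = Real.exp (-s ^ 2 / 2) * (Real.sqrt (2 * Real.pi) / 2) := by
        rw [integral_const_mul, gauss_half]

lemma one_sub_Phi (s : ℝ) :
    1 - Phi s = (Real.sqrt (2 * Real.pi))⁻¹ * ∫ x in Ioi s, Real.exp (-x ^ 2 / 2) := by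
  have h := intervalIntegral.integral_Iic_add_Ioi (μ := volume) (b := s)
    gauss_integrable.integrableOn gauss_integrable.integrableOn
  rw [gauss_total] at h
  have hc : Real.sqrt (2 * Real.pi) ≠ 0 := ne_of_gt sqrt2pi_pos
  unfold Phi
  set c := Real.sqrt (2 * Real.pi) with hcdef
  field_simp
  simp only [neg_div] at h
  linarith [h]

/-- Corollary 2 under correct specification: for a positive random variable `M` and
`α ∈ (0,1)`, `E[Φ(log(1/α)/M + M/2)] ≥ Φ(√(2 log(1/α))) > 1 − α`. -/
theorem universal_inference_never_exact
    {Ω : Type*} [MeasurableSpace Ω] (P : Measure Ω) [IsProbabilityMeasure P]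
    (M : Ω → ℝ) (hM : Measurable M) (hMpos : ∀ᵐ ω ∂P, 0 < M ω)
    (α : ℝ) (hα0 : 0 < α) (hα1 : α < 1) :
    Phi (Real.sqrt (2 * Real.log (1 / α))) ≤
        ∫ ω, Phi (Real.log (1 / α) / M ω + M ω / 2) ∂P ∧
      1 - α < Phi (Real.sqrt (2 * Real.log (1 / α))) := by
  set L := Real.log (1 / α) with hLdef
  have hLpos : 0 < L := Real.log_pos (by rw [lt_div_iff₀ hα0]; linarith)
  set s := Real.sqrt (2 * L) with hsdef
  have hs0 : 0 ≤ s := Real.sqrt_nonneg _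
  have hs2 : s ^ 2 = 2 * L := Real.sq_sqrt (by positivity)
  constructor
  · have hpt : ∀ᵐ ω ∂P, Phi s ≤ Phi (L / M ω + M ω / 2) := by
      filter_upwards [hMpos] with ω hm
      apply Phi_mono
      rw [div_add_div _ _ (ne_of_gt hm) two_ne_zero, le_div_iff₀ (by positivity)]
      nlinarith [sq_nonneg (M ω - s)]
    have hint : Integrable (fun ω => Phi (L / M ω + M ω / 2)) P := by
      apply Integrable.mono' (integrable_const (1:ℝ))
      · exact (Phi_mono.measurable.comp ((hM.const_div L).add (hM.div_const 2))).aestronglyMeasurable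
      · filter_upwards with ω
        rw [Real.norm_eq_abs, abs_of_nonneg (Phi_nonneg _)]
        exact Phi_le_one _
    calc Phi s = ∫ _ω, Phi s ∂P := by simp
      _ ≤ _ := integral_mono_ae (integrable_const _) hint hpt
  · have hexp : Real.exp (-s ^ 2 / 2) = α := by
      rw [hs2]
      have : -(2 * L) / 2 = -L := by ring
      rw [this, hLdef, one_div, Real.log_inv, neg_neg, Real.exp_log hα0]
    have h1 : 1 - Phi s ≤ α / 2 := by
      rw [one_sub_Phi s]
      calc (Real.sqrt (2 * Real.pi))⁻¹ * ∫ x in Ioi s, Real.exp (-x ^ 2 / 2)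
          ≤ (Real.sqrt (2 * Real.pi))⁻¹ * (Real.exp (-s ^ 2 / 2) * (Real.sqrt (2 * Real.pi) / 2)) :=
            mul_le_mul_of_nonneg_left (tail_bound hs0) (by positivity)
        _ = α / 2 := by
            rw [hexp]
            field_simp
    linarith
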